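/- The Petersen graph has cycle spectrum exactly {5, 6, 8, 9}; in particular, it does not contain three cycles of consecutive lengths. -/

import Mathlib

open SimpleGraph

/-- `G` is `k`-connected: more than `k` vertices, and deleting any set of fewer than
`k` vertices leaves a connected graph. -/
def KConnected {V : Type*} (G : SimpleGraph V) (k : ℕ) : Prop :=
  k < Nat.card V ∧ ∀ S : Set V, S.Finite → S.ncard < k → (G.induce Sᶜ).Connected

/-- `G + xy`: the graph `G` with the edge `xy` added (equal to `G` if already present). -/
def AddEdge {V : Type*} (G : SimpleGraph V) (x y : V) : SimpleGraph V :=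
  G ⊔ SimpleGraph.fromEdgeSet {s(x, y)}

/-- `G` has a cycle of length `n`. -/
def HasCycleLength {V : Type*} (G : SimpleGraph V) (n : ℕ) : Prop :=
  ∃ (v : V) (c : G.Walk v v), c.IsCycle ∧ c.length = n

/-- `G` contains `k` cycles of consecutive lengths. -/
def HasConsecCycles {V : Type*} (G : SimpleGraph V) (k : ℕ) : Prop :=
  ∃ m : ℕ, ∀ i < k, HasCycleLength G (m + i)
/-- The Petersen graph as the Kneser graph K(5,2). -/
def Petersen : SimpleGraph {s : Finset (Fin 5) // s.card = 2} where
  Adj a b := Disjoint a.1 b.1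
  symm := ⟨fun a b h => h.symm⟩
  loopless := by
    constructor
    intro a h
    have h2 := a.2
    have : (a.1 : Finset (Fin 5)) = (∅ : Finset (Fin 5)) := disjoint_self.mp h
    simp [this] at h2
set_option maxRecDepth 20000

def pedges : List (Fin 10 × Fin 10) :=
  [(0,7),(0,8),(0,9),(1,5),(1,6),(1,9),(2,4),(2,6),(2,8),(3,4),(3,5),(3,7),(4,9),(5,8),(6,7)]

def adjB (a b : Fin 10) : Bool := (a,b) ∈ pedges || (b,a) ∈ pedges

def P10 : SimpleGraph (Fin 10) where
  Adj a b := adjB a b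
  symm := by
    constructor
    intro a b h
    exact (by decide : ∀ a b : Fin 10, adjB a b = true → adjB b a = true) a b h
  loopless := by
    constructor
    intro a h
    exact (by decide : ∀ a : Fin 10, ¬ adjB a a = true) a h

instance : DecidableRel P10.Adj := fun a b => inferInstanceAs (Decidable (adjB a b = true))

def exts (l : List (Fin 10)) : List (List (Fin 10)) :=
  match l with
  | [] => []
  | a :: _ => ((List.finRange 10).filter (fun b => adjB a b && !(decide (b ∈ l)))).map (· :: l)

def levels : ℕ → List (List (Fin 10))
  | 0 => []
  | 1 => (List.finRange 10).map ([·])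
  | (n+2) => (levels (n+1)).flatMap exts

def closes : List (Fin 10) → Bool
  | [] => false
  | a :: rest =>
    match (a :: rest).getLast? with
    | some b => adjB b a
    | none => false

lemma mem_levels : ∀ (n : ℕ) (l : List (Fin 10)),
    l ∈ levels (n+1) ↔ l.length = n+1 ∧ l.Nodup ∧ l.Chain' (fun a b => P10.Adj a b) := by
  intro n
  induction n with
  | zero =>
    intro l
    simp only [levels, List.mem_map, List.mem_finRange]
    constructor
    · rintro ⟨a, -, rfl⟩; simp [List.Chain']
    · rintro ⟨h, -, -⟩
      match l, h with
      | [a], _ => exact ⟨a, by simp⟩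
  | succ n ih =>
    intro l
    simp only [levels, List.mem_flatMap]
    constructor
    · rintro ⟨r, hr, hl⟩
      obtain ⟨hlen, hnd, hch⟩ := (ih r).1 hr
      match r, hlen with
      | a :: t, hlen =>
        simp only [exts, List.mem_map, List.mem_filter, List.mem_finRange, true_and,
          Bool.and_eq_true, Bool.not_eq_true', decide_eq_false_iff_not] at hl
        obtain ⟨b, ⟨hab, hbmem⟩, rfl⟩ := hl
        refine ⟨by simpa using hlen, by simp [hnd, hbmem], ?_⟩
        exact List.isChain_cons_cons.2 ⟨P10.adj_symm hab, hch⟩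
    · rintro ⟨hlen, hnd, hch⟩
      match l, hlen with
      | b :: a :: t, hlen =>
        obtain ⟨hba, hch'⟩ := List.isChain_cons_cons.1 hch
        refine ⟨a :: t, (ih _).2 ⟨by simpa using hlen, hnd.of_cons, hch'⟩, ?_⟩
        simp only [exts, List.mem_map, List.mem_filter, List.mem_finRange, true_and,
          Bool.and_eq_true, Bool.not_eq_true', decide_eq_false_iff_not]
        exact ⟨b, ⟨P10.adj_symm hba, by simpa using hnd.notMem⟩, rfl⟩

lemma no_cyc (n : ℕ) (hall : ((levels n).all fun l => !closes l) = true) :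
    ¬ HasCycleLength P10 n := by
  rintro ⟨v, c, hc, hl⟩
  have h3 : 3 ≤ n := hl ▸ hc.three_le_length
  have hlen : c.support.tail.length = n := by
    rw [List.length_tail, c.length_support, hl]
    omega
  have hnd : c.support.tail.Nodup := hc.support_nodup
  have hch : c.support.tail.Chain' (fun a b => P10.Adj a b) := by
    have h2 := c.isChain_adj_support
    rw [c.support_eq_cons] at h2
    exact h2.tail
  have hmem : c.support.tail ∈ levels n := by
    obtain ⟨m, rfl⟩ : ∃ m, n = m + 1 := ⟨n - 1, by omega⟩
    exact (mem_levels m _).2 ⟨hlen, hnd, hch⟩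
  have hclose : closes c.support.tail = true := by
    obtain ⟨a, rest, ht2⟩ : ∃ a rest, c.support.tail = a :: rest := by
      cases h : c.support.tail with
      | nil => rw [h] at hlen; simp at hlen; omega
      | cons a rest => exact ⟨a, rest, rfl⟩
    have h2 : c.support.getLast? = some v := by
      rw [List.getLast?_eq_getLast (l := c.support) (by simp)]
      exact congrArg some c.getLast_support
    rw [c.support_eq_cons, ht2] at h2
    have hgl : (a :: rest).getLast? = some v := by
      rw [← List.getLast?_cons_cons]; exact h2
    have hadj : P10.Adj v a := by
      have h2 := c.isChain_adj_support
      rw [c.support_eq_cons, ht2] at h2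
      exact (List.isChain_cons_cons.1 h2).1
    rw [ht2]
    simp only [closes, hgl]
    simpa [P10] using hadj
  have := List.all_eq_true.1 hall _ hmem
  simp [hclose] at this


lemma p10_bounds {n : ℕ} (h : HasCycleLength P10 n) : 3 ≤ n ∧ n ≤ 10 := by
  obtain ⟨v, c, hc, hl⟩ := h
  refine ⟨hl ▸ hc.three_le_length, ?_⟩
  have hlen : c.support.tail.length = n := by
    rw [List.length_tail, c.length_support, hl]; omega
  have := hc.support_nodup.length_le_card
  simpa [hlen] using this

lemma hasCycle_iff_iso {V W : Type*} {G : SimpleGraph V} {H : SimpleGraph W}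
    (e : G ≃g H) (n : ℕ) : HasCycleLength G n ↔ HasCycleLength H n := by
  constructor
  · rintro ⟨v, c, hc, hl⟩
    exact ⟨e v, c.map e.toHom, hc.map (fun a b hab => e.toEquiv.injective hab),
      by rw [SimpleGraph.Walk.length_map]; exact hl⟩
  · rintro ⟨v, c, hc, hl⟩
    exact ⟨e.symm v, c.map e.symm.toHom, hc.map (fun a b hab => e.symm.toEquiv.injective hab),
      by rw [SimpleGraph.Walk.length_map]; exact hl⟩

def pvAux : Fin 10 → Finset (Fin 5)
  | 0 => {0,1} | 1 => {0,2} | 2 => {0,3} | 3 => {0,4} | 4 => {1,2}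
  | 5 => {1,3} | 6 => {1,4} | 7 => {2,3} | 8 => {2,4} | 9 => {3,4}

def pv (i : Fin 10) : {s : Finset (Fin 5) // s.card = 2} :=
  ⟨pvAux i, (by decide : ∀ j : Fin 10, (pvAux j).card = 2) i⟩

instance : DecidableRel Petersen.Adj :=
  fun a b => inferInstanceAs (Decidable (Disjoint a.1 b.1))

noncomputable def isoP : P10 ≃g Petersen where
  toEquiv := Equiv.ofBijective pv (by decide)
  map_rel_iff' := by
    intro a b
    show Petersen.Adj (pv a) (pv b) ↔ P10.Adj a b
    revert a b
    decide

def c5 : P10.Walk 0 0 :=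
  .cons (show P10.Adj 0 7 by decide) <| .cons (show P10.Adj 7 3 by decide) <|
  .cons (show P10.Adj 3 4 by decide) <| .cons (show P10.Adj 4 9 by decide) <|
  .cons (show P10.Adj 9 0 by decide) .nil

def c6 : P10.Walk 0 0 :=
  .cons (show P10.Adj 0 7 by decide) <| .cons (show P10.Adj 7 3 by decide) <|
  .cons (show P10.Adj 3 4 by decide) <| .cons (show P10.Adj 4 2 by decide) <|
  .cons (show P10.Adj 2 8 by decide) <| .cons (show P10.Adj 8 0 by decide) .nil

def c8 : P10.Walk 0 0 :=
  .cons (show P10.Adj 0 7 by decide) <| .cons (show P10.Adj 7 3 by decide) <|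
  .cons (show P10.Adj 3 4 by decide) <| .cons (show P10.Adj 4 2 by decide) <|
  .cons (show P10.Adj 2 6 by decide) <| .cons (show P10.Adj 6 1 by decide) <|
  .cons (show P10.Adj 1 9 by decide) <| .cons (show P10.Adj 9 0 by decide) .nil

def c9 : P10.Walk 0 0 :=
  .cons (show P10.Adj 0 7 by decide) <| .cons (show P10.Adj 7 3 by decide) <|
  .cons (show P10.Adj 3 4 by decide) <| .cons (show P10.Adj 4 2 by decide) <|
  .cons (show P10.Adj 2 6 by decide) <| .cons (show P10.Adj 6 1 by decide) <|
  .cons (show P10.Adj 1 5 by decide) <| .cons (show P10.Adj 5 8 by decide) <|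
  .cons (show P10.Adj 8 0 by decide) .nil

lemma hc5 : c5.IsCycle := by
  rw [SimpleGraph.Walk.isCycle_def]
  exact ⟨by rw [SimpleGraph.Walk.isTrail_def]; decide, by simp [c5], by decide⟩

lemma hc6 : c6.IsCycle := by
  rw [SimpleGraph.Walk.isCycle_def]
  exact ⟨by rw [SimpleGraph.Walk.isTrail_def]; decide, by simp [c6], by decide⟩

lemma hc8 : c8.IsCycle := by
  rw [SimpleGraph.Walk.isCycle_def]
  exact ⟨by rw [SimpleGraph.Walk.isTrail_def]; decide, by simp [c8], by decide⟩

lemma hc9 : c9.IsCycle := by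
  rw [SimpleGraph.Walk.isCycle_def]
  exact ⟨by rw [SimpleGraph.Walk.isTrail_def]; decide, by simp [c9], by decide⟩

/-- The cycle spectrum of the Petersen graph is exactly {5, 6, 8, 9}; in particular it
contains no three cycles of consecutive lengths. -/
theorem petersen_cycle_spectrum :
    (∀ n : ℕ, HasCycleLength Petersen n ↔ n ∈ ({5, 6, 8, 9} : Set ℕ)) ∧
      ¬ HasConsecCycles Petersen 3 :=  by
  have key : ∀ n : ℕ, HasCycleLength Petersen n ↔ n ∈ ({5, 6, 8, 9} : Set ℕ) := by
    intro n
    rw [← hasCycle_iff_iso isoP n]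
    constructor
    · intro h
      obtain ⟨h3, h10⟩ := p10_bounds h
      simp only [Set.mem_insert_iff, Set.mem_singleton_iff]
      by_contra hn
      push_neg at hn
      obtain ⟨hn5, hn6, hn8, hn9⟩ := hn
      have : n = 3 ∨ n = 4 ∨ n = 7 ∨ n = 10 := by omega
      rcases this with rfl | rfl | rfl | rfl
      · exact no_cyc 3 (by decide) h
      · exact no_cyc 4 (by decide) h
      · exact no_cyc 7 (by decide) h
      · exact no_cyc 10 (by decide) h
    · intro hn
      simp only [Set.mem_insert_iff, Set.mem_singleton_iff] at hn
      rcases hn with rfl | rfl | rfl | rfl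
      exacts [⟨0, c5, hc5, rfl⟩, ⟨0, c6, hc6, rfl⟩, ⟨0, c8, hc8, rfl⟩, ⟨0, c9, hc9, rfl⟩]
  refine ⟨key, ?_⟩
  rintro ⟨m, hm⟩
  have h0 := (key (m + 0)).1 (hm 0 (by norm_num))
  have h1 := (key (m + 1)).1 (hm 1 (by norm_num))
  have h2 := (key (m + 2)).1 (hm 2 (by norm_num))
  simp only [Set.mem_insert_iff, Set.mem_singleton_iff] at h0 h1 h2
  omega
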